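/- Let 0 < τ₁ < ⋯ < τ_M ≤ 1, Q the collocation matrix, and Q_{Δ,M} = diag(τ₁/M, …, τ_M/M). For any x ∈ ℝ^M whose interpolating polynomial p = ∑ⱼ xⱼℓⱼ has zero coefficients in degrees 0 through k−1 (with 1 ≤ k ≤ M−1), the interpolating polynomial of (Q − Q_{Δ,M})x has zero coefficients in degrees 0 through k. -/

import Mathlib

open Polynomial Matrix Finset

noncomputable def collMat {M : ℕ} (τ : Fin M → ℝ) : Matrix (Fin M) (Fin M) ℝ :=
  Matrix.of fun i j => ∫ s in (0:ℝ)..(τ i), (Lagrange.basis Finset.univ τ j).eval s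

/-- Formal antiderivative of a polynomial (with zero constant term). -/
noncomputable def antider (q : ℝ[X]) : ℝ[X] :=
  q.sum fun n a => C (a * ((n : ℝ) + 1)⁻¹) * X ^ (n + 1)

lemma antider_coeff_zero (q : ℝ[X]) : (antider q).coeff 0 = 0 := by
  rw [antider, Polynomial.sum, finset_sum_coeff]
  refine Finset.sum_eq_zero fun n _ => ?_
  simp [coeff_C_mul, coeff_X_pow]

lemma antider_coeff_succ (q : ℝ[X]) (m : ℕ) :
    (antider q).coeff (m + 1) = q.coeff m * ((m : ℝ) + 1)⁻¹ := by
  rw [antider, Polynomial.sum, finset_sum_coeff]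
  have : ∀ n ∈ q.support,
      (C (q.coeff n * ((n : ℝ) + 1)⁻¹) * X ^ (n + 1)).coeff (m + 1) =
        if n = m then q.coeff n * ((n : ℝ) + 1)⁻¹ else 0 := by
    intro n _
    rw [coeff_C_mul, coeff_X_pow]
    by_cases h : n = m
    · simp [h]
    · rw [if_neg (by omega : ¬ m + 1 = n + 1), mul_zero, if_neg h]
  rw [Finset.sum_congr rfl this, Finset.sum_ite_eq' q.support m]
  split_ifs with h
  · rfl
  · rw [Polynomial.notMem_support_iff.mp h, zero_mul]

lemma eval_zero_antider (q : ℝ[X]) : (antider q).eval 0 = 0 := by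
  rw [antider, Polynomial.sum, eval_finset_sum]
  refine Finset.sum_eq_zero fun n _ => ?_
  simp [zero_pow (Nat.succ_ne_zero n)]

lemma derivative_antider (q : ℝ[X]) : derivative (antider q) = q := by
  rw [antider, Polynomial.sum, map_sum]
  conv_rhs => rw [q.as_sum_support]
  refine Finset.sum_congr rfl fun n _ => ?_
  rw [derivative_C_mul, derivative_X_pow, Nat.add_sub_cancel, ← mul_assoc, ← C_mul,
    mul_assoc, Nat.cast_add, Nat.cast_one, inv_mul_cancel₀ (by positivity), mul_one,
    C_mul_X_pow_eq_monomial]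

lemma integral_eval (q : ℝ[X]) (t : ℝ) :
    ∫ s in (0:ℝ)..t, q.eval s = (antider q).eval t := by
  have hderiv : ∀ s ∈ Set.uIcc (0:ℝ) t,
      HasDerivAt (fun u => (antider q).eval u) (q.eval s) s := by
    intro s _
    simpa [derivative_antider] using (antider q).hasDerivAt s
  rw [intervalIntegral.integral_eq_sub_of_hasDerivAt hderiv
    (q.continuous.intervalIntegrable 0 t), eval_zero_antider, sub_zero]

/-- if the interpolating polynomial of `x` has vanishing coefficients in
degrees `0,…,k-1` (`1 ≤ k ≤ M-1`), then the interpolating polynomial of `(Q - Q_{Δ,M})x`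
has vanishing coefficients in degrees `0,…,k`. -/
theorem minSRNS_raises_degree (M : ℕ) (τ : Fin M → ℝ) (hmono : StrictMono τ)
    (hpos : ∀ i, 0 < τ i) (h1 : ∀ i, τ i ≤ 1) (k : ℕ) (hk1 : 1 ≤ k) (hkM : k ≤ M - 1)
    (x : Fin M → ℝ)
    (hx : ∀ d : ℕ, d < k → (∑ j : Fin M, C (x j) * Lagrange.basis Finset.univ τ j).coeff d = 0) :
    ∀ d : ℕ, d ≤ k →
      (∑ j : Fin M,
        C ((collMat τ - Matrix.diagonal fun i => τ i / M).mulVec x j) *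
          Lagrange.basis Finset.univ τ j).coeff d = 0 := by
  have hM2 : 2 ≤ M := by omega
  have hinj : Set.InjOn τ (Finset.univ : Finset (Fin M)) := hmono.injective.injOn
  set p : ℝ[X] := ∑ j : Fin M, C (x j) * Lagrange.basis Finset.univ τ j with hp
  have hpinterp : p = Lagrange.interpolate Finset.univ τ x := by
    rw [Lagrange.interpolate_apply]
  have hpdeg : p.degree < (M : ℕ) := by
    rw [hpinterp]
    simpa using Lagrange.degree_interpolate_lt x hinj
  have hpcoeff_top : ∀ m : ℕ, M ≤ m → p.coeff m = 0 := by
    intro m hm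
    exact coeff_eq_zero_of_degree_lt (lt_of_lt_of_le hpdeg (by exact_mod_cast hm))
  have hpeval : ∀ i, p.eval (τ i) = x i := by
    intro i
    rw [hpinterp]
    exact Lagrange.eval_interpolate_at_node x hinj (Finset.mem_univ i)
  -- the polynomial r
  set r : ℝ[X] := antider p - C ((M : ℝ))⁻¹ * (X * p) with hr
  have hrcoeff : ∀ m : ℕ, r.coeff (m + 1) = p.coeff m * (((m : ℝ) + 1)⁻¹ - ((M : ℝ))⁻¹) := by
    intro m
    rw [hr, coeff_sub, antider_coeff_succ, coeff_C_mul, coeff_X_mul]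
    ring
  have hrdeg : r.degree < (M : ℕ) := by
    rw [degree_lt_iff_coeff_zero]
    intro m hm
    have hm' : (M : ℕ) ≤ m := by exact_mod_cast hm
    obtain ⟨m', rfl⟩ : ∃ m', m = m' + 1 := ⟨m - 1, by omega⟩
    rw [hrcoeff]
    rcases eq_or_lt_of_le hm' with h | h
    · have : m' = M - 1 := by omega
      subst this
      have : ((M - 1 : ℕ) : ℝ) + 1 = (M : ℝ) := by
        have : ((M - 1 : ℕ) : ℝ) = (M : ℝ) - 1 := by
          push_cast [Nat.cast_sub (by omega : 1 ≤ M)]; ring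
        rw [this]; ring
      rw [this, sub_self, mul_zero]
    · rw [hpcoeff_top m' (by omega), zero_mul]
  have hrcoeff_lo : ∀ d : ℕ, d ≤ k → r.coeff d = 0 := by
    intro d hd
    cases d with
    | zero =>
        rw [hr, coeff_sub, antider_coeff_zero, coeff_C_mul]
        simp [coeff_zero_eq_eval_zero]
    | succ m =>
        rw [hrcoeff, hx m (by omega), zero_mul]
  -- evaluation of r at the nodes
  have hreval : ∀ i, r.eval (τ i) =
      (collMat τ - Matrix.diagonal fun i => τ i / M).mulVec x i := by
    intro i
    have hQ : (collMat τ).mulVec x i = (antider p).eval (τ i) := by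
      rw [← integral_eval]
      have : p.eval = fun s => ∑ j : Fin M, x j * (Lagrange.basis Finset.univ τ j).eval s := by
        funext s
        rw [hp, eval_finset_sum]
        simp [eval_mul]
      rw [this, intervalIntegral.integral_finset_sum (f := fun j s => x j * (Lagrange.basis Finset.univ τ j).eval s) (fun j _ =>
        ((continuous_const.mul (Lagrange.basis Finset.univ τ j).continuous).intervalIntegrable 0 (τ i)))]
      simp only [Matrix.mulVec, dotProduct, collMat, Matrix.of_apply]
      refine Finset.sum_congr rfl fun j _ => ?_
      rw [intervalIntegral.integral_const_mul]
      ring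
    have hD : (Matrix.diagonal fun i => τ i / M).mulVec x i = τ i / M * x i :=
      Matrix.mulVec_diagonal _ _ _
    rw [Matrix.sub_mulVec, Pi.sub_apply, hQ, hD, hr]
    simp only [eval_sub, eval_mul, eval_C, eval_X, hpeval]
    ring
  -- conclude via uniqueness of interpolation
  have key : (∑ j : Fin M,
      C ((collMat τ - Matrix.diagonal fun i => τ i / M).mulVec x j) *
        Lagrange.basis Finset.univ τ j) = r := by
    have := Lagrange.eq_interpolate (v := τ) (f := r) hinj (by simpa using hrdeg)
    rw [← Lagrange.interpolate_apply]
    conv_rhs => rw [this]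
    refine congrArg _ ?_
    funext i
    rw [hreval]
  intro d hd
  rw [key]
  exact hrcoeff_lo d hd
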